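/- Let (Ω,μ) be a probability space and suppose for each unit vector x there are measurable functions F¹_x, F²_x : Ω → [−1,1] such that for all unit vectors a, b one has E[F¹_a F²_b] = −⟨a,b⟩ (the Euclidean inner product). Then a contradiction follows; i.e., no such family of [−1,1]-valued random variables on a single probability space can reproduce the EPR correlations −a·b for all pairs of unit vectors in ℝ³. -/

import Mathlib

open MeasureTheory

/-- Scalar fact: if `p*q = -1` with `p,q ∈ [-1,1]`, then `q = -p` and `p² = 1`. -/
lemma epr_perfect_anticorr_scalar (p q : ℝ) (hp : p ∈ Set.Icc (-1:ℝ) 1)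
    (hq : q ∈ Set.Icc (-1:ℝ) 1) (h : p * q = -1) : q = -p ∧ p ^ 2 = 1 := by
  obtain ⟨hp1, hp2⟩ := hp; obtain ⟨hq1, hq2⟩ := hq
  have h2 : p ^ 2 = 1 := by nlinarith [sq_nonneg (p + q), sq_nonneg (p - q)]
  have h3 : q ^ 2 = 1 := by nlinarith [sq_nonneg (p + q), sq_nonneg (p - q)]
  exact ⟨by nlinarith [sq_nonneg (p + q)], h2⟩

/-- Bell-type pointwise bound. -/
lemma epr_bell_pointwise (a b c : ℝ) (ha : a ^ 2 = 1) (hb : b ^ 2 = 1)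
    (hc1 : -1 ≤ c) (hc2 : c ≤ 1) : -1 ≤ -(a * b) + a * c - b * c := by
  have h1 : 0 ≤ 1 - a * b := by nlinarith [sq_nonneg (a - b)]
  have h2 : 0 ≤ 1 + a * c := by nlinarith [sq_nonneg (a + c)]
  nlinarith [mul_nonneg h1 h2]

noncomputable def eprA : EuclideanSpace ℝ (Fin 3) :=
  (WithLp.equiv 2 (Fin 3 → ℝ)).symm ![1, 0, 0]
noncomputable def eprB : EuclideanSpace ℝ (Fin 3) :=
  (WithLp.equiv 2 (Fin 3 → ℝ)).symm ![1/2, Real.sqrt 3 / 2, 0]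
noncomputable def eprC : EuclideanSpace ℝ (Fin 3) :=
  (WithLp.equiv 2 (Fin 3 → ℝ)).symm ![-(1/2), Real.sqrt 3 / 2, 0]

lemma epr_sqrt3 : Real.sqrt 3 ^ 2 = 3 := Real.sq_sqrt (by norm_num)

lemma eprA_norm : ‖eprA‖ = 1 := by
  rw [EuclideanSpace.norm_eq, Fin.sum_univ_three]
  simp only [eprA, WithLp.equiv_symm_apply, PiLp.toLp_apply, WithLp.ofLp_toLp, Matrix.cons_val_zero, Matrix.cons_val_one,
    Matrix.head_cons, Matrix.cons_val_two, Matrix.tail_cons, Real.norm_eq_abs, sq_abs]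
  rw [show (1:ℝ)^2 + 0^2 + 0^2 = 1 by norm_num]
  exact Real.sqrt_one

lemma eprB_norm : ‖eprB‖ = 1 := by
  rw [EuclideanSpace.norm_eq, Fin.sum_univ_three]
  simp only [eprB, WithLp.equiv_symm_apply, PiLp.toLp_apply, WithLp.ofLp_toLp, Matrix.cons_val_zero, Matrix.cons_val_one,
    Matrix.head_cons, Matrix.cons_val_two, Matrix.tail_cons, Real.norm_eq_abs, sq_abs]
  rw [show (1/2:ℝ)^2 + (Real.sqrt 3/2)^2 + 0^2 = 1 by nlinarith [epr_sqrt3]]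
  exact Real.sqrt_one

lemma eprC_norm : ‖eprC‖ = 1 := by
  rw [EuclideanSpace.norm_eq, Fin.sum_univ_three]
  simp only [eprC, WithLp.equiv_symm_apply, PiLp.toLp_apply, WithLp.ofLp_toLp, Matrix.cons_val_zero, Matrix.cons_val_one,
    Matrix.head_cons, Matrix.cons_val_two, Matrix.tail_cons, Real.norm_eq_abs, sq_abs]
  rw [show (-(1/2):ℝ)^2 + (Real.sqrt 3/2)^2 + 0^2 = 1 by nlinarith [epr_sqrt3]]
  exact Real.sqrt_one

lemma epr_inner_ab : (inner ℝ eprA eprB : ℝ) = 1/2 := by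
  simp [eprA, eprB, WithLp.equiv_symm_apply, PiLp.inner_apply, Fin.sum_univ_three, RCLike.inner_apply]

lemma epr_inner_ac : (inner ℝ eprA eprC : ℝ) = -(1/2) := by
  simp [eprA, eprC, WithLp.equiv_symm_apply, PiLp.inner_apply, Fin.sum_univ_three, RCLike.inner_apply]

lemma epr_inner_bc : (inner ℝ eprB eprC : ℝ) = 1/2 := by
  simp only [eprB, eprC, PiLp.inner_apply, Fin.sum_univ_three, RCLike.inner_apply,
    WithLp.equiv_symm_apply, PiLp.toLp_apply, WithLp.ofLp_toLp, Matrix.cons_val_zero, Matrix.cons_val_one,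
    Matrix.head_cons, Matrix.cons_val_two, Matrix.tail_cons, conj_trivial]
  nlinarith [epr_sqrt3]

theorem no_classical_epr {Ω : Type*} [MeasurableSpace Ω] (μ : Measure Ω)
    [IsProbabilityMeasure μ]
    (F1 F2 : EuclideanSpace ℝ (Fin 3) → Ω → ℝ)
    (hm1 : ∀ x, ‖x‖ = 1 → Measurable (F1 x))
    (hm2 : ∀ x, ‖x‖ = 1 → Measurable (F2 x))
    (hb1 : ∀ x, ‖x‖ = 1 → ∀ ω, F1 x ω ∈ Set.Icc (-1 : ℝ) 1)
    (hb2 : ∀ x, ‖x‖ = 1 → ∀ ω, F2 x ω ∈ Set.Icc (-1 : ℝ) 1)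
    (hEPR : ∀ a b : EuclideanSpace ℝ (Fin 3), ‖a‖ = 1 → ‖b‖ = 1 →
      ∫ ω, F1 a ω * F2 b ω ∂μ = -(inner ℝ a b : ℝ)) :
    False := by
  -- integrability of products
  have hint : ∀ x y, ‖x‖ = 1 → ‖y‖ = 1 → Integrable (fun ω => F1 x ω * F2 y ω) μ := by
    intro x y hx hy
    refine ⟨((hm1 x hx).mul (hm2 y hy)).aestronglyMeasurable, ?_⟩
    apply HasFiniteIntegral.of_bounded (C := 1)
    filter_upwards with ω
    have h1 := hb1 x hx ω; have h2 := hb2 y hy ω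
    rw [Real.norm_eq_abs, abs_mul]
    calc |F1 x ω| * |F2 y ω| ≤ 1 * 1 := by
          apply mul_le_mul (abs_le.mpr ⟨h1.1, h1.2⟩) (abs_le.mpr ⟨h2.1, h2.2⟩)
            (abs_nonneg _) zero_le_one
      _ = 1 := by norm_num
  -- perfect anticorrelation a.e.
  have hac : ∀ x, ‖x‖ = 1 → ∀ᵐ ω ∂μ, F1 x ω * F2 x ω = -1 := by
    intro x hx
    have hxx : ∫ ω, F1 x ω * F2 x ω ∂μ = -1 := by
      rw [hEPR x x hx hx, real_inner_self_eq_norm_sq, hx]; norm_num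
    have hnn : 0 ≤ fun ω => 1 + F1 x ω * F2 x ω := by
      intro ω
      have h1 := hb1 x hx ω; have h2 := hb2 x hx ω
      simp only [Pi.zero_apply]
      nlinarith [h1.1, h1.2, h2.1, h2.2]
    have hi : Integrable (fun ω => 1 + F1 x ω * F2 x ω) μ :=
      (integrable_const 1).add (hint x x hx hx)
    have h0 : ∫ ω, (1 + F1 x ω * F2 x ω) ∂μ = 0 := by
      rw [integral_add (integrable_const 1) (hint x x hx hx), hxx]
      simp
    have := (integral_eq_zero_iff_of_nonneg hnn hi).mp h0
    filter_upwards [this] with ω hω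
    have : 1 + F1 x ω * F2 x ω = 0 := hω
    linarith
  -- the three directions
  have hna := eprA_norm; have hnb := eprB_norm; have hnc := eprC_norm
  -- pointwise Bell bound a.e.
  have hbell : ∀ᵐ ω ∂μ, -1 ≤ F1 eprA ω * F2 eprB ω - F1 eprA ω * F2 eprC ω
      + F1 eprB ω * F2 eprC ω := by
    filter_upwards [hac eprB hnb, hac eprC hnc] with ω hB hC
    obtain ⟨hB1, hB2⟩ := epr_perfect_anticorr_scalar _ _ (hb1 eprB hnb ω) (hb2 eprB hnb ω) hB
    obtain ⟨hC1, hC2⟩ := epr_perfect_anticorr_scalar _ _ (hb1 eprC hnc ω) (hb2 eprC hnc ω) hC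
    have ha := hb1 eprA hna ω
    have key := epr_bell_pointwise (F1 eprC ω) (F1 eprB ω) (F1 eprA ω) hC2 hB2 ha.1 ha.2
    rw [hB1, hC1]
    nlinarith [key]
  -- integrate the Bell bound
  have hIbell : (-1 : ℝ) ≤ ∫ ω, (F1 eprA ω * F2 eprB ω - F1 eprA ω * F2 eprC ω
      + F1 eprB ω * F2 eprC ω) ∂μ := by
    have hiall : Integrable (fun ω => F1 eprA ω * F2 eprB ω - F1 eprA ω * F2 eprC ω
        + F1 eprB ω * F2 eprC ω) μ :=
      ((hint _ _ hna hnb).sub (hint _ _ hna hnc)).add (hint _ _ hnb hnc)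
    have := integral_mono_ae (integrable_const (-1 : ℝ)) hiall hbell
    simpa using this
  have hIval : ∫ ω, (F1 eprA ω * F2 eprB ω - F1 eprA ω * F2 eprC ω
      + F1 eprB ω * F2 eprC ω) ∂μ = -(3/2) := by
    have hsub : Integrable (fun ω => F1 eprA ω * F2 eprB ω - F1 eprA ω * F2 eprC ω) μ :=
      (hint _ _ hna hnb).sub (hint _ _ hna hnc)
    rw [integral_add hsub (hint _ _ hnb hnc),
      integral_sub (hint _ _ hna hnb) (hint _ _ hna hnc),
      hEPR _ _ hna hnb, hEPR _ _ hna hnc, hEPR _ _ hnb hnc,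
      epr_inner_ab, epr_inner_ac, epr_inner_bc]
    norm_num
  rw [hIval] at hIbell
  norm_num at hIbell
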